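/- If a function f on ground set N = ∪_{t∈T} N_t (with the N_t pairwise disjoint) admits one arrival-consistent submodular order π and is modular within each N_t (f(N_t ∪ S) = f(S) + Σ_{e∈N_t} f(e|S) for S ⊆ N∖N_t), then every arrival-consistent total order over N is also a submodular order for f. -/

import Mathlib

/-- `lt`-submodular order for a set function w.r.t. a strict order relation `lt`. -/
def SubmodOrderRel {α : Type*} [DecidableEq α] (lt : α → α → Prop) (f : Finset α → ℝ) : Prop :=
  ∀ A B C : Finset α, B ⊆ A →
    (∀ x ∈ A \ B, ∀ y ∈ B, lt y x) →
    (∀ c ∈ C, ∀ x ∈ A, lt x c) →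
    f (C ∪ A) - f A ≤ f (C ∪ B) - f B

section Aux

variable {α : Type*} [Fintype α] [DecidableEq α] {n : ℕ} {τ : α → Fin n}
  {f : Finset α → ℝ} {π : α → α → Prop}

/-- Marginal of an element `e` of block `v` over a base `S₀ ∪ Z ∪ W`
(`S₀` earlier blocks, `Z` same block, `W` later blocks) is at most its
marginal over `S₀` alone. -/
lemma aux_UD (hπtot : IsStrictTotalOrder α π)
    (hπcons : ∀ x y, τ x < τ y → π x y) (hπso : SubmodOrderRel π f)
    {v : Fin n} {e : α} (he : τ e = v) (S₀ Z W : Finset α)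
    (hS : ∀ s ∈ S₀, τ s < v) (hZ : ∀ z ∈ Z, τ z = v) (heZ : e ∉ Z)
    (hW : ∀ w ∈ W, v < τ w) :
    f (insert e (S₀ ∪ Z ∪ W)) - f (S₀ ∪ Z ∪ W) ≤ f (insert e S₀) - f S₀ := by
  classical
  have ptrans : ∀ {a b c : α}, π a b → π b c → π a c := by
    intro a b c h1 h2
    exact hπtot.toIsStrictOrder.toIsTrans.trans a b c h1 h2
  have ptri : ∀ a b : α, π a b ∨ a = b ∨ π b a := fun a b =>
    @trichotomous _ π hπtot.toTrichotomous a b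
  set Zm := Z.filter (fun z => π z e) with hZm
  set B₀ := S₀ ∪ Zm with hB₀
  set K := (Z \ Zm) ∪ W with hK
  -- membership facts
  have hZmZ : ∀ z ∈ Zm, z ∈ Z ∧ π z e := by
    intro z hz; exact ⟨(Finset.mem_filter.mp hz).1, (Finset.mem_filter.mp hz).2⟩
  have hec : ∀ c ∈ K, π e c := by
    intro c hc
    rcases Finset.mem_union.mp hc with h | h
    · rcases Finset.mem_sdiff.mp h with ⟨hcZ, hcZm⟩
      have hne : c ≠ e := fun hh => heZ (hh ▸ hcZ)
      have hnp : ¬ π c e := fun hh => hcZm (Finset.mem_filter.mpr ⟨hcZ, hh⟩)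
      rcases ptri c e with h1 | h1 | h1
      · exact absurd h1 hnp
      · exact absurd h1 hne
      · exact h1
    · exact hπcons e c (by rw [he]; exact hW c h)
  have h1 : f (K ∪ insert e B₀) - f (insert e B₀) ≤ f (K ∪ B₀) - f B₀ := by
    apply hπso (insert e B₀) B₀ K (Finset.subset_insert _ _)
    · intro x hx y hy
      rcases Finset.mem_sdiff.mp hx with ⟨hx1, hx2⟩
      have hxe : x = e := by
        rcases Finset.mem_insert.mp hx1 with h | h
        · exact h
        · exact absurd h hx2
      subst hxe
      rcases Finset.mem_union.mp hy with h | h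
      · exact hπcons y x (by rw [he]; exact hS y h)
      · exact (hZmZ y h).2
    · intro c hc x hx
      have hcK := hec c hc
      rcases Finset.mem_insert.mp hx with h | h
      · rw [h]; exact hcK
      · rcases Finset.mem_union.mp h with h' | h'
        · -- x ∈ S₀, c ∈ K : τ x < v ≤ τ c-ish; distinguish c's block
          rcases Finset.mem_union.mp hc with h'' | h''
          · have : τ c = v := hZ c (Finset.mem_sdiff.mp h'').1
            exact hπcons x c (by rw [this]; exact hS x h')
          · exact hπcons x c (lt_trans (hS x h') (hW c h''))
        · exact ptrans (hZmZ x h').2 hcK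
  have h2 : f ({e} ∪ B₀) - f B₀ ≤ f ({e} ∪ S₀) - f S₀ := by
    apply hπso B₀ S₀ {e} Finset.subset_union_left
    · intro x hx y hy
      rcases Finset.mem_sdiff.mp hx with ⟨hx1, hx2⟩
      have hxZm : x ∈ Zm := by
        rcases Finset.mem_union.mp hx1 with h | h
        · exact absurd h hx2
        · exact h
      have : τ x = v := hZ x (hZmZ x hxZm).1
      exact hπcons y x (by rw [this]; exact hS y hy)
    · intro c hc x hx
      have hce : c = e := Finset.mem_singleton.mp hc
      subst hce
      rcases Finset.mem_union.mp hx with h | h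
      · exact hπcons x c (by rw [he]; exact hS x h)
      · exact (hZmZ x h).2
  have hs1 : S₀ ∪ Z ∪ W = K ∪ B₀ := by
    ext a
    simp only [hK, hB₀, hZm, Finset.mem_union, Finset.mem_sdiff, Finset.mem_filter]
    tauto
  have hs2 : insert e (S₀ ∪ Z ∪ W) = K ∪ insert e B₀ := by
    rw [hs1, Finset.union_insert]
  rw [hs2, hs1]
  rw [← Finset.insert_eq, ← Finset.insert_eq] at h2
  linarith

/-- Sum bound: marginal of same-block set `R` over `S₀ ∪ Q` is at most the sum of
singleton marginals over `S₀`. -/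
lemma aux_sum (hπtot : IsStrictTotalOrder α π)
    (hπcons : ∀ x y, τ x < τ y → π x y) (hπso : SubmodOrderRel π f)
    {v : Fin n} :
    ∀ (k : ℕ) (R Q S₀ : Finset α), R.card = k →
      (∀ s ∈ S₀, τ s < v) → (∀ r ∈ R, τ r = v) → (∀ q ∈ Q, τ q = v) →
      Disjoint R Q →
      f (R ∪ (S₀ ∪ Q)) - f (S₀ ∪ Q) ≤ ∑ r ∈ R, (f (insert r S₀) - f S₀) := by
  intro k
  induction k with
  | zero =>
    intro R Q S₀ hcard _ _ _ _
    have : R = ∅ := Finset.card_eq_zero.mp hcard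
    subst this
    simp
  | succ k ih =>
    intro R Q S₀ hcard hS hR hQ hdisj
    have hne : R.Nonempty := Finset.card_pos.mp (by omega)
    obtain ⟨r, hr⟩ := hne
    have hrQ : r ∉ Q := Finset.disjoint_left.mp hdisj hr
    have hUD := aux_UD hπtot hπcons hπso (hR r hr) S₀ Q ∅ hS hQ hrQ (by simp)
    rw [Finset.union_empty] at hUD
    have hcard' : (R.erase r).card = k := by
      rw [Finset.card_erase_of_mem hr, hcard]
      omega
    have hdisj' : Disjoint (R.erase r) (insert r Q) := by
      rw [Finset.disjoint_left]
      intro a ha hmem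
      rcases Finset.mem_insert.mp hmem with h | h
      · exact (Finset.mem_erase.mp ha).1 h
      · exact Finset.disjoint_left.mp hdisj (Finset.mem_erase.mp ha).2 h
    have hih := ih (R.erase r) (insert r Q) S₀ hcard' hS
      (fun a ha => hR a (Finset.mem_of_mem_erase ha))
      (fun q hq => by
        rcases Finset.mem_insert.mp hq with h | h
        · rw [h]; exact hR r hr
        · exact hQ q h) hdisj'
    have hseteq : R ∪ (S₀ ∪ Q) = (R.erase r) ∪ (S₀ ∪ insert r Q) := by
      ext a
      simp only [Finset.mem_union, Finset.mem_erase, Finset.mem_insert]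
      by_cases hae : a = r
      · subst hae; simp [hr]
      · simp [hae]
    have hseteq2 : S₀ ∪ insert r Q = insert r (S₀ ∪ Q) := Finset.union_insert r S₀ Q
    rw [hseteq2] at hih
    have hsum : ∑ x ∈ R.erase r, (f (insert x S₀) - f S₀) + (f (insert r S₀) - f S₀)
        = ∑ x ∈ R, (f (insert x S₀) - f S₀) := Finset.sum_erase_add R _ hr
    rw [hseteq]
    rw [hseteq2]
    linarith

/-- Key equality: the marginal of `x` over `S₀ ∪ Z` (`Z` inside `x`'s block,
`S₀` earlier blocks) equals its marginal over `S₀`. -/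
lemma aux_gl2 (hπtot : IsStrictTotalOrder α π)
    (hπcons : ∀ x y, τ x < τ y → π x y) (hπso : SubmodOrderRel π f)
    (N : Fin n → Finset α) (hN : ∀ t, N t = Finset.univ.filter (fun e => τ e = t))
    (hmod : ∀ t, ∀ S : Finset α, Disjoint S (N t) →
      f (N t ∪ S) = f S + ∑ e ∈ N t, (f (insert e S) - f S))
    {v : Fin n} {x : α} (hx : τ x = v) (S₀ Z : Finset α)
    (hS : ∀ s ∈ S₀, τ s < v) (hZ : ∀ z ∈ Z, τ z = v) (hxZ : x ∉ Z) :
    f (insert x (S₀ ∪ Z)) - f (S₀ ∪ Z) = f (insert x S₀) - f S₀ := by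
  classical
  have hNv : ∀ a, a ∈ N v ↔ τ a = v := by
    intro a; rw [hN v]; simp
  set R' := N v \ insert x Z with hR'
  have hdisjS : Disjoint S₀ (N v) := by
    rw [Finset.disjoint_left]
    intro a ha hmem
    exact absurd ((hNv a).mp hmem) (ne_of_lt (hS a ha))
  have hmod' := hmod v S₀ hdisjS
  have hsubset : insert x Z ⊆ N v := by
    intro a ha
    rw [hNv]
    rcases Finset.mem_insert.mp ha with h | h
    · rw [h]; exact hx
    · exact hZ a h
  have hsum1 : ∑ e ∈ R', (f (insert e S₀) - f S₀) + ∑ e ∈ insert x Z, (f (insert e S₀) - f S₀)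
      = ∑ e ∈ N v, (f (insert e S₀) - f S₀) := Finset.sum_sdiff hsubset
  have hsum2 : ∑ e ∈ insert x Z, (f (insert e S₀) - f S₀)
      = (f (insert x S₀) - f S₀) + ∑ e ∈ Z, (f (insert e S₀) - f S₀) :=
    Finset.sum_insert hxZ
  have hset3 : N v ∪ S₀ = R' ∪ (S₀ ∪ insert x Z) := by
    ext a
    simp only [hR', Finset.mem_union, Finset.mem_sdiff]
    constructor
    · intro h
      rcases h with h | h
      · by_cases h2 : a ∈ insert x Z
        · exact Or.inr (Or.inr h2)
        · exact Or.inl ⟨h, h2⟩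
      · exact Or.inr (Or.inl h)
    · intro h
      rcases h with ⟨h, _⟩ | h | h
      · exact Or.inl h
      · exact Or.inr h
      · exact Or.inl (hsubset h)
  have b1 := aux_sum hπtot hπcons hπso Z.card Z ∅ S₀ rfl hS hZ (by simp)
    (Finset.disjoint_empty_right _)
  rw [Finset.union_empty] at b1
  have b2 := aux_UD hπtot hπcons hπso hx S₀ Z ∅ hS hZ hxZ (by simp)
  rw [Finset.union_empty] at b2
  have b3 := aux_sum hπtot hπcons hπso R'.card R' (insert x Z) S₀ rfl hS
    (fun r hrr => (hNv r).mp (Finset.mem_sdiff.mp hrr).1)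
    (fun q hq => by
      rcases Finset.mem_insert.mp hq with h | h
      · rw [h]; exact hx
      · exact hZ q h)
    Finset.sdiff_disjoint
  have hseteq2 : S₀ ∪ insert x Z = insert x (S₀ ∪ Z) := Finset.union_insert x S₀ Z
  rw [hseteq2] at b3
  rw [Finset.union_comm Z S₀] at b1
  rw [hset3, hseteq2] at hmod'
  linarith [hmod', hsum1, hsum2, b1, b2, b3]

/-- Main inequality, proven by induction on the set `D` of extra elements. -/
lemma aux_lx (hπtot : IsStrictTotalOrder α π)
    (hπcons : ∀ x y, τ x < τ y → π x y) (hπso : SubmodOrderRel π f)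
    (N : Fin n → Finset α) (hN : ∀ t, N t = Finset.univ.filter (fun e => τ e = t))
    (hmod : ∀ t, ∀ S : Finset α, Disjoint S (N t) →
      f (N t ∪ S) = f S + ∑ e ∈ N t, (f (insert e S) - f S)) :
    ∀ (k : ℕ) (D B C : Finset α), D.card = k → Disjoint B D → Disjoint C (B ∪ D) →
      (∀ b ∈ B, ∀ d ∈ D, τ b ≤ τ d) → (∀ a ∈ B ∪ D, ∀ c ∈ C, τ a ≤ τ c) →
      f (C ∪ (B ∪ D)) - f (B ∪ D) ≤ f (C ∪ B) - f B := by
  intro k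
  induction k with
  | zero =>
    intro D B C hcard _ _ _ _
    have : D = ∅ := Finset.card_eq_zero.mp hcard
    subst this
    simp
  | succ k ih =>
    intro D B C hcard hdisjBD hdisjC hord1 hord2
    classical
    have hne : D.Nonempty := Finset.card_pos.mp (by omega)
    obtain ⟨d, hd, hmax⟩ := Finset.exists_max_image D τ hne
    set v := τ d with hv
    set D' := D.erase d with hD'
    have hDins : D = insert d D' := (Finset.insert_erase hd).symm
    have hBD'le : ∀ a ∈ B ∪ D', τ a ≤ v := by
      intro a ha
      rcases Finset.mem_union.mp ha with h | h
      · exact hord1 a h d hd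
      · exact hmax a (Finset.mem_of_mem_erase h)
    set S₀ := (B ∪ D').filter (fun a => τ a < v) with hS₀
    set Z := (B ∪ D').filter (fun a => τ a = v) with hZdef
    have part1 : S₀ ∪ Z = B ∪ D' := by
      ext a
      simp only [hS₀, hZdef, Finset.mem_union, Finset.mem_filter]
      constructor
      · intro h; tauto
      · intro h
        rcases lt_or_eq_of_le (hBD'le a (Finset.mem_union.mpr h)) with h' | h'
        · exact Or.inl ⟨h, h'⟩
        · exact Or.inr ⟨h, h'⟩
    have hCge : ∀ c ∈ C, v ≤ τ c := fun c hc =>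
      hord2 d (Finset.mem_union_right _ hd) c hc
    set Zc := C.filter (fun a => τ a = v) with hZc
    set W := C.filter (fun a => v < τ a) with hWdef
    have part2 : Zc ∪ W = C := by
      ext a
      simp only [hZc, hWdef, Finset.mem_union, Finset.mem_filter]
      constructor
      · intro h; tauto
      · intro h
        rcases eq_or_lt_of_le (hCge a h) with h' | h'
        · exact Or.inl ⟨h, h'.symm⟩
        · exact Or.inr ⟨h, h'⟩
    have hdB : d ∉ B := Finset.disjoint_right.mp hdisjBD hd
    have hdBD' : d ∉ B ∪ D' := by
      intro h
      rcases Finset.mem_union.mp h with h | h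
      · exact hdB h
      · exact (Finset.mem_erase.mp h).1 rfl
    have hdC : d ∉ C := fun h =>
      Finset.disjoint_left.mp hdisjC h (Finset.mem_union_right _ hd)
    have hSmem : ∀ s ∈ S₀, τ s < v := fun s hs => (Finset.mem_filter.mp hs).2
    have hZmem : ∀ z ∈ Z, τ z = v := fun z hz => (Finset.mem_filter.mp hz).2
    have hdZ : d ∉ Z := fun h => hdBD' (Finset.mem_filter.mp h).1
    have key1 : f (insert d (B ∪ D')) - f (B ∪ D') = f (insert d S₀) - f S₀ := by
      rw [← part1]
      exact aux_gl2 hπtot hπcons hπso N hN hmod hv.symm S₀ Z hSmem hZmem hdZ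
    have key2 : f (insert d ((B ∪ D') ∪ C)) - f ((B ∪ D') ∪ C)
        ≤ f (insert d S₀) - f S₀ := by
      have hset : (B ∪ D') ∪ C = S₀ ∪ (Z ∪ Zc) ∪ W := by
        rw [← part1, ← part2]
        ext a
        simp only [Finset.mem_union]
        tauto
      rw [hset]
      apply aux_UD hπtot hπcons hπso hv.symm S₀ (Z ∪ Zc) W hSmem
      · intro z hz
        rcases Finset.mem_union.mp hz with h | h
        · exact hZmem z h
        · exact (Finset.mem_filter.mp h).2
      · intro h
        rcases Finset.mem_union.mp h with h | h
        · exact hdZ h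
        · exact hdC (Finset.mem_filter.mp h).1
      · intro w hw
        exact (Finset.mem_filter.mp hw).2
    have hcard' : D'.card = k := by
      rw [hD', Finset.card_erase_of_mem hd, hcard]
      omega
    have hih := ih D' B C hcard'
      (Finset.disjoint_of_subset_right (Finset.erase_subset _ _) hdisjBD)
      (Finset.disjoint_of_subset_right
        (Finset.union_subset_union_right (Finset.erase_subset _ _)) hdisjC)
      (fun b hb d' hd' => hord1 b hb d' (Finset.mem_of_mem_erase hd'))
      (fun a ha c hc => hord2 a
        (by
          rcases Finset.mem_union.mp ha with h | h
          · exact Finset.mem_union_left _ h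
          · exact Finset.mem_union_right _ (Finset.mem_of_mem_erase h)) c hc)
    -- rewrite targets
    have hBDins : B ∪ D = insert d (B ∪ D') := by
      rw [hDins, Finset.union_insert]
    have hCBDins : C ∪ (B ∪ D) = insert d (C ∪ (B ∪ D')) := by
      rw [hBDins, Finset.union_insert]
    have hcomm : (B ∪ D') ∪ C = C ∪ (B ∪ D') := Finset.union_comm _ _
    rw [hcomm] at key2
    rw [hCBDins, hBDins]
    linarith

end Aux

/-- if `f` on ground set `N = ⊔_t N_t` (blocks given by `τ`) admits one
arrival-consistent submodular order and is modular within each block `N_t`, then every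
arrival-consistent total order over `N` is a submodular order for `f`. -/
theorem stmt_13 {α : Type*} [Fintype α] [DecidableEq α]
    (n : ℕ) (τ : α → Fin n)
    (N : Fin n → Finset α) (hN : ∀ t, N t = Finset.univ.filter (fun e => τ e = t))
    (f : Finset α → ℝ)
    (hmod : ∀ t, ∀ S : Finset α, Disjoint S (N t) →
      f (N t ∪ S) = f S + ∑ e ∈ N t, (f (insert e S) - f S))
    (π : α → α → Prop) (hπtot : IsStrictTotalOrder α π)
    (hπcons : ∀ x y, τ x < τ y → π x y)
    (hπso : SubmodOrderRel π f) :
    ∀ lt : α → α → Prop, IsStrictTotalOrder α lt →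
      (∀ x y, τ x < τ y → lt x y) → SubmodOrderRel lt f := by
  intro lt hlt hcons A B C hBA h1 h2
  classical
  have hirr : ∀ a : α, ¬ lt a a := hlt.toIsStrictOrder.toIrrefl.irrefl
  have htrans : ∀ {a b c : α}, lt a b → lt b c → lt a c := by
    intro a b c hab hbc
    exact hlt.toIsStrictOrder.toIsTrans.trans a b c hab hbc
  have hD : B ∪ (A \ B) = A := Finset.union_sdiff_of_subset hBA
  have hdisj1 : Disjoint B (A \ B) := Finset.disjoint_sdiff
  have hdisj2 : Disjoint C (B ∪ (A \ B)) := by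
    rw [hD, Finset.disjoint_left]
    intro c hc hcA
    exact hirr c (h2 c hc c hcA)
  have hord1 : ∀ b ∈ B, ∀ d ∈ A \ B, τ b ≤ τ d := by
    intro b hb d hd
    by_contra hcon
    push_neg at hcon
    have hdb : lt d b := hcons d b hcon
    have hbd : lt b d := h1 d hd b hb
    exact hirr b (htrans hbd hdb)
  have hord2 : ∀ a ∈ B ∪ (A \ B), ∀ c ∈ C, τ a ≤ τ c := by
    intro a ha c hc
    rw [hD] at ha
    by_contra hcon
    push_neg at hcon
    have hca : lt c a := hcons c a hcon
    have hac : lt a c := h2 c hc a ha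
    exact hirr a (htrans hac hca)
  have := aux_lx hπtot hπcons hπso N hN hmod (A \ B).card (A \ B) B C rfl
    hdisj1 hdisj2 hord1 hord2
  rw [hD] at this
  exact this
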